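/- (Probability integral transform, conditional version.) Let X be distributed according to the Gaussian measure on ℝ with mean θ and variance 1, conditioned on the event {X ≥ c}. Then F(X; θ, c) is uniformly distributed on [0, 1]: for every p ∈ [0, 1], the conditional probability of the event {x ≥ c : F(x; θ, c) ≤ p} equals p. -/

import Mathlib

open Filter Set MeasureTheory ProbabilityTheory

/-- The standard normal CDF `Φ(t) = (2π)^{−1/2} ∫_{−∞}^t exp(−s²/2) ds`. -/
noncomputable def Phi (t : ℝ) : ℝ :=
  (Real.sqrt (2 * Real.pi))⁻¹ * ∫ s in Set.Iic t, Real.exp (-(s ^ 2) / 2)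

/-- The truncated-normal distribution function
    `F(a; θ, c) := (Φ(a − θ) − Φ(c − θ)) / (1 − Φ(c − θ))`. -/
noncomputable def F (a θ c : ℝ) : ℝ :=
  (Phi (a - θ) - Phi (c - θ)) / (1 - Phi (c - θ))

lemma Phi_eq_gauss (t : ℝ) : ENNReal.ofReal (Phi t) = gaussianReal 0 1 (Iic t) := by
  rw [gaussianReal_apply_eq_integral 0 one_ne_zero]
  congr 1
  rw [Phi, ← integral_const_mul]
  refine setIntegral_congr_fun measurableSet_Iic fun x _ => ?_
  simp [gaussianPDFReal]

lemma gauss_Iic (θ t : ℝ) : gaussianReal θ 1 (Iic t) = ENNReal.ofReal (Phi (t - θ)) := by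
  have h := gaussianReal_map_add_const (μ := 0) (v := 1) θ
  rw [zero_add] at h
  rw [← h, Measure.map_apply (measurable_add_const θ) measurableSet_Iic]
  have hpre : (· + θ) ⁻¹' Iic t = Iic (t - θ) := by
    ext x; simp [le_sub_iff_add_le]
  rw [hpre, ← Phi_eq_gauss]

lemma Phi_pos (t : ℝ) : 0 < Phi t := by
  by_contra h
  push_neg at h
  have h0 : ENNReal.ofReal (Phi t) = 0 := by simp [h]
  rw [Phi_eq_gauss] at h0
  have := gaussianReal_absolutelyContinuous' 0 one_ne_zero h0
  simp at this

lemma Phi_lt_one (t : ℝ) : Phi t < 1 := by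
  have hIoi : gaussianReal 0 1 (Ioi t) ≠ 0 := by
    intro h0
    have := gaussianReal_absolutelyContinuous' 0 one_ne_zero h0
    rw [Real.volume_Ioi] at this
    exact ENNReal.top_ne_zero this
  have hlt : ENNReal.ofReal (Phi t) < 1 := by
    rw [Phi_eq_gauss]
    have hcompl : gaussianReal 0 1 (Iic t) = 1 - gaussianReal 0 1 (Ioi t) := by
      have h := measure_compl (μ := gaussianReal 0 1) (s := Ioi t) measurableSet_Ioi
        (measure_ne_top _ _)
      simpa [compl_Ioi] using h
    rw [hcompl]
    exact ENNReal.sub_lt_self ENNReal.one_ne_top one_ne_zero hIoi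
  rwa [← ENNReal.ofReal_one, ENNReal.ofReal_lt_ofReal_iff one_pos] at hlt

lemma Phi_strictMono : StrictMono Phi := by
  intro a b hab
  have hIoc : gaussianReal 0 1 (Ioc a b) ≠ 0 := by
    intro h0
    have := gaussianReal_absolutelyContinuous' 0 one_ne_zero h0
    rw [Real.volume_Ioc] at this
    simp [ENNReal.ofReal_eq_zero, hab] at this
    linarith
  have hsplit : ENNReal.ofReal (Phi b) = ENNReal.ofReal (Phi a) + gaussianReal 0 1 (Ioc a b) := by
    rw [Phi_eq_gauss, Phi_eq_gauss, ← measure_union (Iic_disjoint_Ioc le_rfl) measurableSet_Ioc,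
      Iic_union_Ioc_eq_Iic hab.le]
  have hlt : ENNReal.ofReal (Phi a) < ENNReal.ofReal (Phi b) := by
    rw [hsplit]
    exact ENNReal.lt_add_right (by simp) hIoc
  exact (ENNReal.ofReal_lt_ofReal_iff_of_nonneg (Phi_pos a).le).mp hlt

lemma exp_sq_integrable : Integrable (fun s : ℝ => Real.exp (-(s ^ 2) / 2)) := by
  have h : (fun s : ℝ => Real.exp (-(s ^ 2) / 2)) = fun s => Real.exp (-(2⁻¹ : ℝ) * s ^ 2) := by
    ext s; ring_nf
  rw [h]
  exact integrable_exp_neg_mul_sq (by norm_num)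

lemma Phi_continuous : Continuous Phi := by
  have h := exp_sq_integrable
  have heq : Phi = fun t => (Real.sqrt (2 * Real.pi))⁻¹ *
      ((∫ s in Iic (0 : ℝ), Real.exp (-(s ^ 2) / 2)) +
        ∫ s in (0 : ℝ)..t, Real.exp (-(s ^ 2) / 2)) := by
    ext t
    rw [Phi]
    congr 1
    rw [← intervalIntegral.integral_Iic_sub_Iic h.integrableOn h.integrableOn]
    ring
  rw [heq]
  exact continuous_const.mul (continuous_const.add (h.continuous_primitive 0))

lemma Phi_tendsto_one : Tendsto Phi atTop (nhds 1) := by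
  have h := tendsto_measure_Iic_atTop (gaussianReal 0 1)
  rw [measure_univ] at h
  have h2 : Tendsto (fun t => (gaussianReal 0 1 (Iic t)).toReal) atTop (nhds 1) := by
    have h3 := (ENNReal.tendsto_toReal ENNReal.one_ne_top).comp h
    simpa [Function.comp_def] using h3
  have heq : (fun t => (gaussianReal 0 1 (Iic t)).toReal) = Phi := by
    ext t; rw [← Phi_eq_gauss, ENNReal.toReal_ofReal (Phi_pos t).le]
  rwa [heq] at h2

/-- (Probability integral transform, conditional version.) Let `X ~ N(θ, 1)`
conditioned on `{X ≥ c}`. Then `F(X; θ, c)` is uniformly distributed on `[0,1]`: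
for every `p ∈ [0,1]`, the conditional probability of `{x ≥ c : F(x; θ, c) ≤ p}`
equals `p`. -/
theorem stmt_12 (θ c : ℝ) :
    ∀ p ∈ Set.Icc (0 : ℝ) 1,
      (gaussianReal θ 1)[|{x : ℝ | c ≤ x}] {x : ℝ | c ≤ x ∧ F x θ c ≤ p} =
        ENNReal.ofReal p := by
  intro p hp
  obtain ⟨hp0, hp1⟩ := hp
  have hs_eq : {x : ℝ | c ≤ x} = Ici c := rfl
  have hms : MeasurableSet {x : ℝ | c ≤ x} := by rw [hs_eq]; exact measurableSet_Ici
  have hΦc1 : Phi (c - θ) < 1 := Phi_lt_one _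
  have hΦc0 : 0 < Phi (c - θ) := Phi_pos _
  have hD : 0 < 1 - Phi (c - θ) := by linarith
  -- measure of the conditioning set
  have hμs : gaussianReal θ 1 {x : ℝ | c ≤ x} = ENNReal.ofReal (1 - Phi (c - θ)) := by
    have hsing : gaussianReal θ 1 {c} = 0 :=
      gaussianReal_absolutelyContinuous θ one_ne_zero Real.volume_singleton
    have hIio : gaussianReal θ 1 (Iio c) = ENNReal.ofReal (Phi (c - θ)) := by
      have hu : gaussianReal θ 1 (Iic c) = gaussianReal θ 1 (Iio c) + gaussianReal θ 1 {c} := by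
        rw [← measure_union (by simp [disjoint_left]; exact fun a ha => ne_of_lt ha) (measurableSet_singleton c),
          Iio_union_right]
      rw [gauss_Iic, hsing, add_zero] at hu
      exact hu.symm
    rw [hs_eq, ← compl_Iio, measure_compl measurableSet_Iio (measure_ne_top _ _), measure_univ,
      hIio, ← ENNReal.ofReal_one, ← ENNReal.ofReal_sub _ hΦc0.le]
  have hμs0 : gaussianReal θ 1 {x : ℝ | c ≤ x} ≠ 0 := by
    rw [hμs]; exact (ENNReal.ofReal_pos.mpr hD).ne'
  by_cases hp1' : p = 1
  · subst hp1'
    have hset : {x : ℝ | c ≤ x ∧ F x θ c ≤ 1} = {x : ℝ | c ≤ x} := by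
      ext x
      simp only [mem_setOf_eq, and_iff_left_iff_imp]
      intro _
      rw [F, div_le_one hD]
      have := Phi_lt_one (x - θ)
      linarith
    rw [hset, cond_apply hms, Set.inter_self,
      ENNReal.inv_mul_cancel hμs0 (measure_ne_top _ _), ENNReal.ofReal_one]
  · have hplt : p < 1 := lt_of_le_of_ne hp1 hp1'
    set q : ℝ := p * (1 - Phi (c - θ)) + Phi (c - θ) with hq_def
    have hq1 : q < 1 := by nlinarith
    have hqc : Phi (c - θ) ≤ q := by nlinarith
    obtain ⟨b, hb⟩ := (Phi_tendsto_one.eventually (eventually_gt_nhds hq1)).exists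
    have hb' : q ≤ Phi (max b (c - θ)) :=
      le_trans hb.le (Phi_strictMono.monotone (le_max_left _ _))
    obtain ⟨a, ha_mem, haq⟩ := intermediate_value_Icc (le_max_right b (c - θ))
      Phi_continuous.continuousOn (⟨hqc, hb'⟩ : q ∈ Icc (Phi (c - θ)) (Phi (max b (c - θ))))
    have hca : c ≤ a + θ := by linarith [ha_mem.1]
    have hFiff : ∀ x : ℝ, F x θ c ≤ p ↔ x ≤ a + θ := by
      intro x
      calc F x θ c ≤ p ↔ Phi (x - θ) ≤ q := by
            rw [F, div_le_iff₀ hD, sub_le_iff_le_add]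
        _ ↔ Phi (x - θ) ≤ Phi a := by rw [haq]
        _ ↔ x - θ ≤ a := Phi_strictMono.le_iff_le
        _ ↔ x ≤ a + θ := sub_le_iff_le_add
    have hset : {x : ℝ | c ≤ x ∧ F x θ c ≤ p} = Icc c (a + θ) := by
      ext x
      simp only [mem_setOf_eq, mem_Icc, hFiff x]
    have hIcc : gaussianReal θ 1 (Icc c (a + θ)) = ENNReal.ofReal (p * (1 - Phi (c - θ))) := by
      have hsing : gaussianReal θ 1 (Iio c) = ENNReal.ofReal (Phi (c - θ)) := by
        have hsing0 : gaussianReal θ 1 {c} = 0 :=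
          gaussianReal_absolutelyContinuous θ one_ne_zero Real.volume_singleton
        have hu : gaussianReal θ 1 (Iic c) = gaussianReal θ 1 (Iio c) + gaussianReal θ 1 {c} := by
          rw [← measure_union (by simp [disjoint_left]; exact fun a ha => ne_of_lt ha) (measurableSet_singleton c),
            Iio_union_right]
        rw [gauss_Iic, hsing0, add_zero] at hu
        exact hu.symm
      rw [← (by ext x; simp [and_comm] : Iic (a + θ) \ Iio c = Icc c (a + θ)), measure_diff (Iio_subset_Iic_self.trans (Iic_subset_Iic.mpr hca))
        measurableSet_Iio.nullMeasurableSet (measure_ne_top _ _), gauss_Iic, hsing,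
        add_sub_cancel_right, haq, ← ENNReal.ofReal_sub _ hΦc0.le]
      congr 1
      ring
    rw [cond_apply hms, hset, Set.inter_eq_self_of_subset_right (by rw [hs_eq]; exact Icc_subset_Ici_self),
      hIcc, hμs, ENNReal.ofReal_mul hp0, mul_comm (ENNReal.ofReal p), ← mul_assoc,
      ENNReal.inv_mul_cancel (ENNReal.ofReal_pos.mpr hD).ne' ENNReal.ofReal_ne_top, one_mul]
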